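/- Let x ∈ {0,1}^∞ be an infinite binary sequence. If liminf_{n→∞} Λ(x_1...x_n)/n³ > 0 then liminf_{n→∞} Σ(x_1...x_n)/n³ > 0, and conversely if liminf Σ(x_1...x_n)/n³ > 0 then liminf Λ(x_1...x_n)/n³ > 0. -/

import Mathlib

open Filter

/-- Number of occurrences of `ξ` as a factor of `w` (occurrence at position `i`
means `ξ = w_{i+1}...w_{i+|ξ|}`). -/
def occ (w ξ : List Bool) : ℕ :=
  ((List.range w.length).filter (fun i => ξ.isPrefixOf (w.drop i))).length

/-- `ℓ`-fold concatenation `η^ℓ` of the word `η`. -/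
def wpow (η : List Bool) (ℓ : ℕ) : List Bool := (List.replicate ℓ η).flatten

/-- The Kamae–Xue complexity `Σ(w) = Σ_{ξ ∈ {0,1}^+} |w|_ξ²`.  Since only
factors of `w` contribute nonzero terms, the sum is taken over the (finite) set
of nonempty sublists of `w`, which contains all factors of `w`. -/
def kxSum (w : List Bool) : ℕ :=
  ∑ ξ ∈ w.sublists.toFinset.filter (fun ξ => ξ ≠ []), (occ w ξ) ^ 2

/-- `Λ(w) = max{|η|²(ℓ+1)³ : η nonempty, ℓ ≥ 1, η^ℓ a factor of w}`. -/
noncomputable def Lam (w : List Bool) : ℕ :=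
  sSup {m | ∃ η ℓ, η ≠ ([] : List Bool) ∧ 1 ≤ ℓ ∧ wpow η ℓ <:+: w ∧
    m = η.length ^ 2 * (ℓ + 1) ^ 3}

/-- A nonempty word is prime (primitive) if it is not a proper power. -/
def IsPrimeWord (η : List Bool) : Prop :=
  η ≠ [] ∧ ∀ ζ ℓ, 2 ≤ ℓ → η ≠ wpow ζ ℓ

/-- `|v|_{ξ,m}`: occurrences of `ξ` in `v` ending in the last `m` positions. -/
def occEnd (v ξ : List Bool) (m : ℕ) : ℕ :=
  ((List.range v.length).filter
    (fun i => ξ.isPrefixOf (v.drop i) && decide (v.length < i + ξ.length + m))).length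

/-- The prefix `x_1 x_2 ⋯ x_n` of the infinite sequence `x`. -/
def pref (x : ℕ → Bool) (n : ℕ) : List Bool := (List.range n).map x
theorem pref_length (x : ℕ → Bool) (n : ℕ) : (pref x n).length = n := by simp [pref]

theorem wpow_zero (η : List Bool) : wpow η 0 = [] := rfl

theorem wpow_succ (η : List Bool) (ℓ : ℕ) : wpow η (ℓ+1) = η ++ wpow η ℓ := by
  simp [wpow, List.replicate_succ]

theorem wpow_length (η : List Bool) (ℓ : ℕ) : (wpow η ℓ).length = ℓ * η.length := by
  induction ℓ with
  | zero => simp [wpow_zero]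
  | succ k ih => rw [wpow_succ]; simp [ih]; ring

theorem wpow_add (η : List Bool) (s t : ℕ) : wpow η (s + t) = wpow η s ++ wpow η t := by
  induction s with
  | zero => simp [wpow_zero]
  | succ k ih => rw [show k+1+t = (k+t)+1 by ring, wpow_succ, wpow_succ, ih]; simp

theorem wpow_prefix (η : List Bool) {s t : ℕ} (h : s ≤ t) : wpow η s <+: wpow η t := by
  obtain ⟨d, rfl⟩ := Nat.exists_eq_add_of_le h
  rw [wpow_add]; exact List.prefix_append _ _

theorem wpow_drop (η : List Bool) {j ℓ : ℕ} (h : j ≤ ℓ) :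
    (wpow η ℓ).drop (j * η.length) = wpow η (ℓ - j) := by
  conv_lhs => rw [show ℓ = j + (ℓ - j) by omega, wpow_add]
  exact List.drop_left' (wpow_length η j)

theorem isPrefixOf_eq_decide (ξ v : List Bool) :
    ξ.isPrefixOf v = decide (ξ <+: v) := by
  by_cases h : ξ <+: v
  · simp [h, List.isPrefixOf_iff_prefix.2 h]
  · have h2 : ¬ (ξ.isPrefixOf v = true) := fun hc => h (List.isPrefixOf_iff_prefix.1 hc)
    simp [h, h2]

theorem occ_eq (w ξ : List Bool) :
    occ w ξ = ((Finset.range w.length).filter (fun i => ξ <+: w.drop i)).card := by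
  rw [occ]
  simp only [Finset.range, Finset.filter, Finset.card, Multiset.range]
  rw [Multiset.filter_coe]
  simp [isPrefixOf_eq_decide]

theorem mem_F {w ξ : List Bool} :
    ξ ∈ w.sublists.toFinset.filter (fun ξ => ξ ≠ ([]:List Bool)) ↔ ξ.Sublist w ∧ ξ ≠ [] := by
  simp [List.mem_sublists]

theorem occ_le (w ξ : List Bool) : occ w ξ ≤ w.length := by
  rw [occ_eq]
  exact (Finset.card_filter_le _ _).trans (by simp)

theorem occ_mono_infix {u w : List Bool} (h : u <:+: w) (ξ : List Bool) :
    occ u ξ ≤ occ w ξ := by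
  obtain ⟨a, b, hw⟩ := h
  rw [occ_eq, occ_eq]
  apply Finset.card_le_card_of_injOn (fun i => a.length + i)
  · intro i hi
    simp only [Finset.mem_coe, Finset.mem_filter, Finset.mem_range] at hi ⊢
    obtain ⟨hi1, hi2⟩ := hi
    subst hw
    constructor
    · simp; omega
    · rw [List.append_assoc, List.drop_append, List.drop_eq_nil_of_le (by omega), List.nil_append,
        show a.length + i - a.length = i by omega, List.drop_append_of_le_length (le_of_lt hi1)]
      exact hi2.trans (List.prefix_append _ _)
  · intro i _ j _ hij
    simpa using hij

theorem occ_pow_lower {η : List Bool} (hη : η ≠ []) {t ℓ : ℕ} (ht : 1 ≤ t) (htl : t ≤ ℓ) :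
    ℓ + 1 - t ≤ occ (wpow η ℓ) (wpow η t) := by
  have ha : 0 < η.length := List.length_pos_iff.2 hη
  rw [occ_eq]
  have := Finset.card_le_card_of_injOn (fun j => j * η.length)
    (s := Finset.range (ℓ + 1 - t))
    (t := (Finset.range (wpow η ℓ).length).filter (fun i => wpow η t <+: (wpow η ℓ).drop i))
    ?_ ?_
  · simpa using this
  · intro j hj
    simp only [Finset.mem_coe, Finset.mem_range] at hj
    have hjl : j ≤ ℓ := by omega
    simp only [Finset.mem_coe, Finset.mem_filter, Finset.mem_range, wpow_length]
    constructor
    · have : j < ℓ := by omega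
      exact (Nat.mul_lt_mul_right ha).2 this
    · rw [wpow_drop η hjl]
      exact wpow_prefix η (by omega)
  · intro i _ j _ hij
    exact Nat.eq_of_mul_eq_mul_right ha hij

theorem easy_core {η : List Bool} {ℓ : ℕ} {w : List Bool} (hη : η ≠ []) (hl : 1 ≤ ℓ)
    (hinf : wpow η ℓ <:+: w) : ℓ ^ 3 ≤ 8 * kxSum w := by
  have ha : 0 < η.length := List.length_pos_iff.2 hη
  set k := (ℓ + 1) / 2 with hk
  have hk1 : 1 ≤ k := by omega
  have hkl : k ≤ ℓ := by omega
  -- each wpow η t for t ∈ Icc 1 k occurs often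
  have hocc : ∀ t ∈ Finset.Icc 1 k, (ℓ + 1 - k) ≤ occ w (wpow η t) := by
    intro t htm
    simp only [Finset.mem_Icc] at htm
    calc ℓ + 1 - k ≤ ℓ + 1 - t := by omega
    _ ≤ occ (wpow η ℓ) (wpow η t) := occ_pow_lower hη htm.1 (le_trans htm.2 hkl)
    _ ≤ occ w (wpow η t) := occ_mono_infix hinf _
  have hsum : ∑ t ∈ Finset.Icc 1 k, (occ w (wpow η t)) ^ 2 ≤ kxSum w := by
    have hinj : ∀ s ∈ Finset.Icc 1 k, ∀ t ∈ Finset.Icc 1 k,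
        wpow η s = wpow η t → s = t := by
      intro s hs t ht hst
      have := congrArg List.length hst
      rw [wpow_length, wpow_length] at this
      exact Nat.eq_of_mul_eq_mul_right ha this
    have himg : ∑ ξ ∈ (Finset.Icc 1 k).image (fun t => wpow η t), (occ w ξ)^2
        = ∑ t ∈ Finset.Icc 1 k, (occ w (wpow η t))^2 := Finset.sum_image hinj
    rw [kxSum, ← himg]
    · apply Finset.sum_le_sum_of_subset
      intro ξ hξ
      simp only [Finset.mem_image] at hξ
      obtain ⟨t, htm, rfl⟩ := hξ
      simp only [Finset.mem_Icc] at htm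
      rw [mem_F]
      constructor
      · exact (((wpow_prefix η (htm.2.trans hkl)).isInfix).trans hinf).sublist
      · apply List.ne_nil_of_length_pos
        rw [wpow_length]
        exact Nat.mul_pos htm.1 ha
  have hlow : k * (ℓ + 1 - k) ^ 2 ≤ ∑ t ∈ Finset.Icc 1 k, (occ w (wpow η t)) ^ 2 := by
    have := Finset.card_nsmul_le_sum (Finset.Icc 1 k)
      (fun t => (occ w (wpow η t))^2) ((ℓ + 1 - k)^2)
      (fun t htm => Nat.pow_le_pow_left (hocc t htm) 2)
    simpa [Nat.card_Icc, smul_eq_mul] using this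
  have h1 : ℓ ≤ 2 * k := by omega
  have h2 : ℓ ≤ 2 * (ℓ + 1 - k) := by omega
  calc ℓ ^ 3 = ℓ * ℓ ^ 2 := by ring
  _ ≤ (2 * k) * ((2 * (ℓ + 1 - k)) ^ 2) := Nat.mul_le_mul h1 (Nat.pow_le_pow_left h2 2)
  _ = 8 * (k * (ℓ + 1 - k) ^ 2) := by ring
  _ ≤ 8 * ∑ t ∈ Finset.Icc 1 k, (occ w (wpow η t)) ^ 2 := Nat.mul_le_mul_left 8 hlow
  _ ≤ 8 * kxSum w := Nat.mul_le_mul_left 8 hsum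

def LamSet (w : List Bool) : Set ℕ :=
  {m | ∃ η ℓ, η ≠ ([] : List Bool) ∧ 1 ≤ ℓ ∧ wpow η ℓ <:+: w ∧
    m = η.length ^ 2 * (ℓ + 1) ^ 3}

theorem Lam_eq (w : List Bool) : Lam w = sSup (LamSet w) := rfl

theorem lamSet_le {w : List Bool} {m : ℕ} (hm : m ∈ LamSet w) : m ≤ 8 * w.length ^ 3 := by
  obtain ⟨η, ℓ, hη, hl, hinf, rfl⟩ := hm
  have ha : 1 ≤ η.length := List.length_pos_iff.2 hη
  have hn : ℓ * η.length ≤ w.length := by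
    have := hinf.length_le
    rwa [wpow_length] at this
  calc η.length ^ 2 * (ℓ + 1) ^ 3 ≤ η.length ^ 2 * (2 * ℓ) ^ 3 :=
        Nat.mul_le_mul_left _ (Nat.pow_le_pow_left (by omega) 3)
  _ = 8 * (η.length ^ 2 * ℓ ^ 3) := by ring
  _ ≤ 8 * (η.length ^ 3 * ℓ ^ 3) :=
        Nat.mul_le_mul_left _ (Nat.mul_le_mul_right _ (Nat.pow_le_pow_right ha (by omega)))
  _ = 8 * (ℓ * η.length) ^ 3 := by ring
  _ ≤ 8 * w.length ^ 3 := Nat.mul_le_mul_left _ (Nat.pow_le_pow_left hn 3)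

theorem lamSet_bddAbove (w : List Bool) : BddAbove (LamSet w) :=
  ⟨8 * w.length ^ 3, fun _ hm => lamSet_le hm⟩

theorem Lam_le (w : List Bool) : Lam w ≤ 8 * w.length ^ 3 := by
  rw [Lam_eq]
  rcases Set.eq_empty_or_nonempty (LamSet w) with h | h
  · rw [h, csSup_empty]; exact Nat.zero_le _
  · exact csSup_le h (fun _ hm => lamSet_le hm)

theorem le_Lam {w : List Bool} {m : ℕ} (hm : m ∈ LamSet w) : m ≤ Lam w :=
  le_csSup (lamSet_bddAbove w) hm

theorem Lam_mem {w : List Bool} (h : 0 < Lam w) : Lam w ∈ LamSet w := by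
  rcases Set.eq_empty_or_nonempty (LamSet w) with he | hne
  · exfalso; rw [Lam_eq, he, csSup_empty] at h; exact absurd h (by simp)
  · exact Nat.sSup_mem hne (lamSet_bddAbove w)

theorem sum_occ_le (w : List Bool) (G : Finset (List Bool)) (B : ℕ)
    (hB : ∀ i ∈ Finset.range w.length, (G.filter (fun ξ => ξ <+: w.drop i)).card ≤ B) :
    ∑ ξ ∈ G, occ w ξ ≤ w.length * B := by
  have h1 : ∑ ξ ∈ G, occ w ξ
      = ∑ i ∈ Finset.range w.length, (G.filter (fun ξ => ξ <+: w.drop i)).card := by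
    simp only [occ_eq, Finset.card_filter]
    rw [Finset.sum_comm]
  rw [h1]
  calc ∑ i ∈ Finset.range w.length, (G.filter (fun ξ => ξ <+: w.drop i)).card
      ≤ ∑ _i ∈ Finset.range w.length, B := Finset.sum_le_sum hB
  _ = w.length * B := by simp [mul_comm]

theorem prefix_card_le_length (G : Finset (List Bool)) (hne : ∀ ξ ∈ G, ξ ≠ []) (v : List Bool) :
    (G.filter (fun ξ => ξ <+: v)).card ≤ v.length := by
  have := Finset.card_le_card_of_injOn (fun ξ : List Bool => ξ.length)
    (s := G.filter (fun ξ => ξ <+: v)) (t := Finset.Icc 1 v.length) ?_ ?_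
  · simpa using this
  · intro ξ hξ
    simp only [Finset.mem_coe, Finset.mem_filter] at hξ
    simp only [Finset.mem_coe, Finset.mem_Icc]
    exact ⟨List.length_pos_iff.2 (hne ξ hξ.1), hξ.2.length_le⟩
  · intro ξ hξ ζ hζ hlen
    simp only [Finset.mem_coe, Finset.mem_filter] at hξ hζ
    simp only at hlen
    rw [List.prefix_iff_eq_take.1 hξ.2, List.prefix_iff_eq_take.1 hζ.2, hlen]

theorem prefix_card_le_one (G : Finset (List Bool)) {m : ℕ} (hm : ∀ ξ ∈ G, ξ.length = m)
    (v : List Bool) : (G.filter (fun ξ => ξ <+: v)).card ≤ 1 := by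
  apply Finset.card_le_one.2
  intro ξ hξ ζ hζ
  simp only [Finset.mem_filter] at hξ hζ
  rw [List.prefix_iff_eq_take.1 hξ.2, List.prefix_iff_eq_take.1 hζ.2,
    hm ξ hξ.1, hm ζ hζ.1]

theorem sum_occ_F_le (w : List Bool) :
    ∑ ξ ∈ w.sublists.toFinset.filter (fun ξ => ξ ≠ []), occ w ξ ≤ w.length * w.length := by
  apply sum_occ_le
  intro i _
  refine le_trans (prefix_card_le_length _ ?_ _) (by simp)
  intro ξ hξ
  exact (mem_F.1 hξ).2

theorem kxSum_le (w : List Bool) : kxSum w ≤ w.length ^ 3 := by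
  rw [kxSum]
  calc ∑ ξ ∈ w.sublists.toFinset.filter (fun ξ => ξ ≠ []), occ w ξ ^ 2
      ≤ ∑ ξ ∈ w.sublists.toFinset.filter (fun ξ => ξ ≠ []), w.length * occ w ξ := by
        apply Finset.sum_le_sum
        intro ξ _
        rw [pow_two]
        exact Nat.mul_le_mul_right _ (occ_le w ξ)
  _ = w.length * ∑ ξ ∈ w.sublists.toFinset.filter (fun ξ => ξ ≠ []), occ w ξ := by
        rw [Finset.mul_sum]
  _ ≤ w.length * (w.length * w.length) := Nat.mul_le_mul_left _ (sum_occ_F_le w)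
  _ = w.length ^ 3 := by ring

theorem wpow_one (η : List Bool) : wpow η 1 = η := by simp [wpow]

theorem prefix_wpow_aux (η : List Bool) (hη : η ≠ []) :
    ∀ (N : ℕ) (ξ : List Bool), ξ.length ≤ N → ξ <+: η ++ ξ →
      ∀ k, ξ.length ≤ k * η.length → ξ <+: wpow η k := by
  have he : 1 ≤ η.length := List.length_pos_iff.2 hη
  intro N
  induction N with
  | zero =>
    intro ξ hlen _ k _
    have : ξ = [] := List.eq_nil_of_length_eq_zero (by omega)
    simp [this]
  | succ N ih =>
    intro ξ hlen h k hk
    rcases Nat.eq_zero_or_pos ξ.length with hm0 | hm0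
    · have : ξ = [] := List.eq_nil_of_length_eq_zero hm0
      simp [this]
    have hk1 : 1 ≤ k := by
      rcases Nat.eq_zero_or_pos k with h0 | h0
      · exfalso; rw [h0] at hk; omega
      · exact h0
    by_cases hme : ξ.length ≤ η.length
    · -- ξ is a prefix of η
      have hξη : ξ <+: η := by
        have h1 := List.prefix_iff_eq_take.1 h
        rw [List.take_append_of_le_length hme] at h1
        rw [h1]
        exact List.take_prefix _ _
      refine hξη.trans ?_
      have := wpow_prefix η hk1
      rwa [wpow_one] at this
    · push_neg at hme
      have h1 := List.prefix_iff_eq_take.1 h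
      rw [List.take_append, List.take_of_length_le (by omega)] at h1
      -- h1 : ξ = η ++ ξ.take (ξ.length - η.length)
      set ξ' := List.take (ξ.length - η.length) ξ with hξ'
      have hlen' : ξ'.length = ξ.length - η.length := by
        rw [hξ', List.length_take]; omega
      have hpre' : ξ' <+: η ++ ξ' := by
        have : ξ' <+: ξ := List.take_prefix _ _
        rwa [h1] at this
      have hrec : ξ' <+: wpow η (k - 1) := by
        apply ih ξ' (by omega) hpre' (k - 1)
        rw [hlen']
        have : (k - 1) * η.length = k * η.length - η.length := by
          rw [Nat.sub_mul, one_mul]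
        omega
      rw [h1, show k = (k - 1) + 1 by omega, wpow_succ]
      obtain ⟨t, ht⟩ := hrec
      exact ⟨t, by rw [List.append_assoc, ht]⟩

/-- Two overlapping occurrences of `ξ` at distance `e` give the power
`(v.take e)^(|ξ|/e + 1)` as a prefix of `v`. -/
theorem power_of_two_occ {v ξ : List Bool} {e : ℕ} (he : 1 ≤ e) (hem : e ≤ ξ.length)
    (h1 : ξ <+: v) (h2 : ξ <+: v.drop e) :
    (v.take e).length = e ∧ wpow (v.take e) (ξ.length / e + 1) <+: v := by
  have hm1 : 1 ≤ ξ.length := le_trans he hem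
  have hdl : ξ.length ≤ v.length - e := by
    have := h2.length_le
    rwa [List.length_drop] at this
  have hev : e + ξ.length ≤ v.length := by
    rcases Nat.lt_or_ge v.length e with hc | hc
    · exfalso; omega
    · omega
  set η := v.take e with hηdef
  have hηlen : η.length = e := by rw [hηdef, List.length_take]; omega
  have hη : η ≠ [] := List.ne_nil_of_length_pos (by omega)
  refine ⟨hηlen, ?_⟩
  have hηξ : η ++ ξ <+: v := by
    obtain ⟨t, ht⟩ := h2
    exact ⟨t, by rw [List.append_assoc, ht, List.take_append_drop]⟩
  have hle : ξ <+: η ++ ξ :=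
    List.prefix_of_prefix_length_le h1 hηξ (by rw [List.length_append]; omega)
  set k := ξ.length / e with hkdef
  have hke : k * e ≤ ξ.length := Nat.div_mul_le_self _ _
  have hkm : ξ.length ≤ (k + 1) * e := by
    have hmod := Nat.div_add_mod ξ.length e
    have hmlt := Nat.mod_lt ξ.length (show 0 < e by omega)
    have : (k + 1) * e = e * k + e := by ring
    rw [this]
    rw [hkdef]
    omega
  have hk1 : ξ <+: wpow η (k + 1) :=
    prefix_wpow_aux η hη ξ.length ξ le_rfl hle (k + 1) (by rw [hηlen]; exact hkm)
  have hk2 : wpow η k <+: ξ := by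
    apply List.prefix_of_prefix_length_le (wpow_prefix η (Nat.le_succ k)) hk1
    rw [wpow_length, hηlen]
    exact hke
  have hfin : wpow η (k + 1) <+: η ++ ξ := by
    rw [wpow_succ]
    obtain ⟨t, ht⟩ := hk2
    exact ⟨t, by rw [List.append_assoc, ht]⟩
  exact hfin.trans hηξ

theorem pigeon {n K d : ℕ} (S : Finset ℕ) (hS : S ⊆ Finset.range n) (hK : 3 ≤ K)
    (hcard : K ≤ S.card) (hd : n + 1 ≤ (K - 2) * d) :
    ∃ i ∈ S, ∃ j ∈ S, i < j ∧ j < i + d := by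
  have hd0 : 0 < d := by
    rcases Nat.eq_zero_or_pos d with h0 | h0
    · exfalso; rw [h0, Nat.mul_zero] at hd; omega
    · exact h0
  have hmaps : ∀ i ∈ S, i / d ∈ Finset.range (K - 2) := by
    intro i hi
    simp only [Finset.mem_range]
    by_contra hcon
    push_neg at hcon
    have h1 : (K - 2) * d ≤ (i / d) * d := Nat.mul_le_mul_right d hcon
    have h2 : (i / d) * d ≤ i := Nat.div_mul_le_self i d
    have h3 : i < n := Finset.mem_range.1 (hS hi)
    omega
  have hlt : (Finset.range (K - 2)).card < S.card := by
    rw [Finset.card_range]; omega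
  obtain ⟨i, hi, j, hj, hne, heq⟩ := Finset.exists_ne_map_eq_of_card_lt_of_maps_to hlt hmaps
  have key : ∀ a b, a ∈ S → b ∈ S → a < b → a / d = b / d → b < a + d := by
    intro a b _ _ hab hdiv
    have e1 := Nat.div_add_mod b d
    have e2 : d * (a / d) ≤ a := Nat.mul_div_le a d
    rw [hdiv] at e2
    have e3 : b % d < d := Nat.mod_lt b hd0
    omega
  rcases Ne.lt_or_gt hne with hlt' | hlt'
  · exact ⟨i, hi, j, hj, hlt', key i j hi hj hlt' heq⟩
  · exact ⟨j, hj, i, hi, hlt', key j i hj hi hlt' heq.symm⟩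

set_option maxHeartbeats 2000000 in
theorem hard_core {w : List Bool} {c : ℝ} (hc : 0 < c)
    (h8 : 8 ≤ c * w.length) (h8' : 8 ≤ c ^ 2 * w.length)
    (hS : c * (w.length : ℝ) ^ 3 ≤ (kxSum w : ℝ)) :
    c ^ 4 / 32 * (w.length : ℝ) ^ 3 ≤ (Lam w : ℝ) := by
  classical
  have hcne : c ≠ 0 := ne_of_gt hc
  set n := w.length with hn_def
  have hn1 : 1 ≤ n := by
    rcases Nat.eq_zero_or_pos n with h0 | h0
    · exfalso; rw [h0] at h8; push_cast at h8; nlinarith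
    · exact h0
  have hn0 : (0 : ℝ) < n := by exact_mod_cast hn1
  set F := w.sublists.toFinset.filter (fun ξ => ξ ≠ []) with hF_def
  set P : ℕ → ℕ := fun m => ∑ ξ ∈ F.filter (fun ξ => ξ.length = m), occ w ξ ^ 2 with hP_def
  have h_split : ∑ m ∈ Finset.Icc 1 n, P m = kxSum w := by
    rw [kxSum]
    exact Finset.sum_fiberwise_of_maps_to (fun ξ hξ => by
      obtain ⟨hsub, hne⟩ := mem_F.1 hξ
      simp only [Finset.mem_Icc]
      exact ⟨List.length_pos_iff.2 hne, hsub.length_le⟩) _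
  have hocc_fiber : ∀ m : ℕ, ∑ ξ ∈ F.filter (fun ξ => ξ.length = m), occ w ξ ≤ n := by
    intro m
    have := sum_occ_le w (F.filter (fun ξ => ξ.length = m)) 1
      (fun i _ => prefix_card_le_one _ (fun ξ hξ => (Finset.mem_filter.1 hξ).2) _)
    simpa using this
  have hPle : ∀ m : ℕ, P m ≤ n * n := by
    intro m
    calc P m ≤ ∑ ξ ∈ F.filter (fun ξ => ξ.length = m), n * occ w ξ := by
          apply Finset.sum_le_sum
          intro ξ _
          rw [pow_two]
          exact Nat.mul_le_mul_right _ (occ_le w ξ)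
    _ = n * ∑ ξ ∈ F.filter (fun ξ => ξ.length = m), occ w ξ := by rw [Finset.mul_sum]
    _ ≤ n * n := Nat.mul_le_mul_left _ (hocc_fiber m)
  set S : Finset ℕ := (Finset.Icc 1 n).filter (fun m => c / 2 * (n : ℝ) ^ 2 ≤ (P m : ℝ))
    with hS_def
  have hcardS : c / 2 * (n : ℝ) ≤ (S.card : ℝ) := by
    have hsplit2 : ∑ m ∈ S, (P m : ℝ) + ∑ m ∈ (Finset.Icc 1 n).filter
        (fun m => ¬ (c / 2 * (n : ℝ) ^ 2 ≤ (P m : ℝ))), (P m : ℝ)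
        = (kxSum w : ℝ) := by
      rw [hS_def, Finset.sum_filter_add_sum_filter_not, ← Nat.cast_sum]
      exact_mod_cast congrArg (fun t : ℕ => (t : ℝ)) h_split
    have hb1 : ∑ m ∈ S, (P m : ℝ) ≤ (S.card : ℝ) * ((n : ℝ) * n) := by
      have := Finset.sum_le_card_nsmul S (fun m => (P m : ℝ)) ((n : ℝ) * n)
        (fun m _ => by exact_mod_cast Nat.cast_le.2 (hPle m))
      simpa [nsmul_eq_mul] using this
    have hb2 : ∑ m ∈ (Finset.Icc 1 n).filter
        (fun m => ¬ (c / 2 * (n : ℝ) ^ 2 ≤ (P m : ℝ))), (P m : ℝ)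
        ≤ (n : ℝ) * (c / 2 * (n : ℝ) ^ 2) := by
      have hcard : (((Finset.Icc 1 n).filter
          (fun m => ¬ (c / 2 * (n : ℝ) ^ 2 ≤ (P m : ℝ)))).card : ℝ) ≤ (n : ℝ) := by
        have h1 : ((Finset.Icc 1 n).filter
            (fun m => ¬ (c / 2 * (n : ℝ) ^ 2 ≤ (P m : ℝ)))).card ≤ n := by
          refine le_trans (Finset.card_filter_le _ _) ?_
          simp
        exact_mod_cast h1
      have hsm := Finset.sum_le_card_nsmul ((Finset.Icc 1 n).filter
          (fun m => ¬ (c / 2 * (n : ℝ) ^ 2 ≤ (P m : ℝ))))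
        (fun m => (P m : ℝ)) (c / 2 * (n : ℝ) ^ 2)
        (fun m hm => le_of_lt (by
          have := (Finset.mem_filter.1 hm).2
          push_neg at this
          exact this))
      rw [nsmul_eq_mul] at hsm
      refine le_trans hsm ?_
      apply mul_le_mul_of_nonneg_right hcard
      positivity
    have key : c / 2 * (n : ℝ) ^ 3 ≤ (S.card : ℝ) * ((n : ℝ) * n) := by nlinarith
    have := le_of_mul_le_mul_right
      (show (c / 2 * (n : ℝ)) * ((n : ℝ) * n) ≤ (S.card : ℝ) * ((n : ℝ) * n) by nlinarith)
      (mul_pos hn0 hn0)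
    exact this
  have hSne : S.Nonempty := by
    apply Finset.card_pos.1
    have : (0 : ℝ) < (S.card : ℝ) := by nlinarith
    exact_mod_cast this
  set m₀ := S.max' hSne with hm₀_def
  have hm₀S : m₀ ∈ S := S.max'_mem hSne
  have hm₀Icc : m₀ ∈ Finset.Icc 1 n := (Finset.mem_filter.1 hm₀S).1
  have hm₀P : c / 2 * (n : ℝ) ^ 2 ≤ (P m₀ : ℝ) := (Finset.mem_filter.1 hm₀S).2
  have hm₀n : m₀ ≤ n := (Finset.mem_Icc.1 hm₀Icc).2
  have hcard_le : S.card ≤ m₀ := by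
    have hsub : S ⊆ Finset.Icc 1 m₀ := by
      intro s hs
      simp only [Finset.mem_Icc]
      exact ⟨(Finset.mem_Icc.1 (Finset.mem_filter.1 hs).1).1, S.le_max' s hs⟩
    have := Finset.card_le_card hsub
    simpa [Nat.card_Icc] using this
  have hm₀big : c / 2 * (n : ℝ) ≤ (m₀ : ℝ) :=
    le_trans hcardS (by exact_mod_cast Nat.cast_le.2 hcard_le)
  have hfibne : (F.filter (fun ξ => ξ.length = m₀)).Nonempty := by
    rw [Finset.nonempty_iff_ne_empty]
    intro hcon
    have hP0 : P m₀ = 0 := by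
      rw [hP_def]
      simp only [hcon, Finset.sum_empty]
    rw [hP0] at hm₀P
    have : (0 : ℝ) < c / 2 * (n : ℝ) ^ 2 := by positivity
    simp only [Nat.cast_zero] at hm₀P
    linarith
  obtain ⟨ξ, hξmem, hξmax⟩ := Finset.exists_max_image _ (occ w) hfibne
  have hξlen : ξ.length = m₀ := (Finset.mem_filter.1 hξmem).2
  have hPocc : P m₀ ≤ occ w ξ * n := by
    calc P m₀ ≤ ∑ ζ ∈ F.filter (fun ξ => ξ.length = m₀), occ w ξ * occ w ζ := by
          apply Finset.sum_le_sum
          intro ζ hζ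
          rw [pow_two]
          exact Nat.mul_le_mul_right _ (hξmax ζ hζ)
    _ = occ w ξ * ∑ ζ ∈ F.filter (fun ξ => ξ.length = m₀), occ w ζ := by
          rw [Finset.mul_sum]
    _ ≤ occ w ξ * n := Nat.mul_le_mul_left _ (hocc_fiber m₀)
  have hKbig : c / 2 * (n : ℝ) ≤ (occ w ξ : ℝ) := by
    have h1 : (P m₀ : ℝ) ≤ (occ w ξ : ℝ) * n := by exact_mod_cast Nat.cast_le.2 hPocc
    nlinarith
  have hK3 : 3 ≤ occ w ξ := by
    have : (3 : ℝ) ≤ (occ w ξ : ℝ) := by nlinarith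
    exact_mod_cast this
  -- pigeonhole on occurrences of ξ
  have hS'card : ((Finset.range n).filter (fun i => ξ <+: w.drop i)).card = occ w ξ :=
    (occ_eq w ξ).symm
  obtain ⟨d, hd_def⟩ : ∃ d, d = n / (occ w ξ - 2) + 1 := ⟨_, rfl⟩
  have hK2pos : 0 < occ w ξ - 2 := by omega
  have hd : n + 1 ≤ (occ w ξ - 2) * d := by
    rw [hd_def, Nat.mul_succ]
    have e1 := Nat.div_add_mod n (occ w ξ - 2)
    have e2 := Nat.mod_lt n hK2pos
    linarith
  obtain ⟨i, hi, j, hj, hij, hjd⟩ := pigeon _ (Finset.filter_subset _ _) hK3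
    (le_of_eq hS'card.symm) hd
  have hiP : ξ <+: w.drop i := by
    have := (Finset.mem_filter.1 hi).2
    simpa using this
  have hjP : ξ <+: w.drop j := by
    have := (Finset.mem_filter.1 hj).2
    simpa using this
  obtain ⟨e, he_def⟩ : ∃ e, e = j - i := ⟨_, rfl⟩
  have he1 : 1 ≤ e := by omega
  have heNd : e ≤ n / (occ w ξ - 2) := by
    have h1 : e + 1 ≤ d := by omega
    rw [hd_def] at h1
    omega
  -- real bound on e
  have hK2r : c / 4 * (n : ℝ) ≤ ((occ w ξ - 2 : ℕ) : ℝ) := by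
    have h2 : (2 : ℕ) ≤ occ w ξ := by omega
    rw [Nat.cast_sub h2]
    push_cast
    nlinarith
  have hK2r0 : (0 : ℝ) < ((occ w ξ - 2 : ℕ) : ℝ) := by
    have : (0 : ℝ) < c / 4 * n := by positivity
    linarith
  have her : (e : ℝ) ≤ 4 / c := by
    calc (e : ℝ) ≤ ((n / (occ w ξ - 2) : ℕ) : ℝ) := by exact_mod_cast Nat.cast_le.2 heNd
    _ ≤ (n : ℝ) / ((occ w ξ - 2 : ℕ) : ℝ) := Nat.cast_div_le
    _ ≤ (n : ℝ) / (c / 4 * n) := by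
        apply div_le_div_of_nonneg_left (le_of_lt hn0) (by positivity) hK2r
    _ = 4 / c := by field_simp
  have hm₀r4c : 4 / c ≤ (m₀ : ℝ) := by
    have h1 : 4 / c ≤ c / 2 * n := by
      rw [div_le_iff₀ hc]
      nlinarith
    linarith
  have hem : e ≤ m₀ := by
    have : (e : ℝ) ≤ (m₀ : ℝ) := le_trans her hm₀r4c
    exact_mod_cast this
  -- build the power
  have hjeq : j = i + e := by omega
  have hjP' : ξ <+: (w.drop i).drop e := by
    rw [List.drop_drop]
    rw [hjeq] at hjP
    first
    | exact hjP
    | (have hcomm : e + i = i + e := by omega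
       rw [hcomm]; exact hjP)
  obtain ⟨hηlen, hpow⟩ := power_of_two_occ he1 (by omega : e ≤ ξ.length) hiP hjP'
  obtain ⟨q, hq⟩ : ∃ q, ξ.length / e = q := ⟨_, rfl⟩
  rw [hq] at hpow
  have hη_ne : (w.drop i).take e ≠ [] := List.ne_nil_of_length_pos (by rw [hηlen]; omega)
  have hinfix : wpow ((w.drop i).take e) (q + 1) <:+: w :=
    hpow.isInfix.trans (List.drop_suffix i w).isInfix
  have hmem : ((w.drop i).take e).length ^ 2 * ((q + 1) + 1) ^ 3 ∈ LamSet w :=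
    ⟨(w.drop i).take e, q + 1, hη_ne, by omega, hinfix, rfl⟩
  have hLam : ((w.drop i).take e).length ^ 2 * ((q + 1) + 1) ^ 3 ≤ Lam w := le_Lam hmem
  -- numeric conclusion
  have hqe2 : m₀ + 1 ≤ e * q + e := by
    have e1 := Nat.div_add_mod ξ.length e
    rw [hq, hξlen] at e1
    have e2 : ξ.length % e < e := Nat.mod_lt _ (by omega)
    rw [hξlen] at e2
    linarith
  have hcube : m₀ ^ 3 ≤ e * (((w.drop i).take e).length ^ 2 * ((q + 1) + 1) ^ 3) := by
    rw [hηlen]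
    have h1 : m₀ ≤ e * (q + 2) := by
      have hh : e * (q + 2) = e * q + e + e := by ring
      omega
    calc m₀ ^ 3 ≤ (e * (q + 2)) ^ 3 := Nat.pow_le_pow_left h1 3
    _ = e * (e ^ 2 * ((q + 1) + 1) ^ 3) := by ring
  have hcube2 : (m₀ : ℝ) ^ 3 ≤ (e : ℝ) * (Lam w : ℝ) := by
    have h1 : m₀ ^ 3 ≤ e * Lam w := le_trans hcube (Nat.mul_le_mul_left _ hLam)
    exact_mod_cast h1
  have he0 : (0 : ℝ) < (e : ℝ) := by exact_mod_cast he1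
  have hLam_ge : (m₀ : ℝ) ^ 3 / (e : ℝ) ≤ (Lam w : ℝ) := by
    rw [div_le_iff₀ he0]
    linarith
  have hm₀0 : (0 : ℝ) ≤ (m₀ : ℝ) := Nat.cast_nonneg _
  calc c ^ 4 / 32 * (n : ℝ) ^ 3 = (c / 2 * n) ^ 3 / (4 / c) := by
        field_simp
        ring
  _ ≤ (m₀ : ℝ) ^ 3 / (4 / c) :=
        (div_le_div_iff_of_pos_right (by positivity : (0:ℝ) < 4 / c)).2
          (pow_le_pow_left₀ (by positivity) hm₀big 3)
  _ ≤ (m₀ : ℝ) ^ 3 / (e : ℝ) :=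
        div_le_div_of_nonneg_left (by positivity) he0 her
  _ ≤ (Lam w : ℝ) := hLam_ge

theorem easy_core_real {w : List Bool} {c : ℝ} (hc : 0 < c) (hn1 : 1 ≤ w.length)
    (hL : c * (w.length : ℝ) ^ 3 ≤ (Lam w : ℝ)) :
    c ^ 3 / 4096 * (w.length : ℝ) ^ 3 ≤ (kxSum w : ℝ) := by
  set n := w.length with hn_def
  have hn0 : (0 : ℝ) < n := by exact_mod_cast hn1
  have hLpos : 0 < Lam w := by
    have h1 : (0 : ℝ) < (Lam w : ℝ) := lt_of_lt_of_le (by positivity) hL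
    exact_mod_cast h1
  obtain ⟨η, ℓ, hη, hℓ, hinf, hval⟩ := Lam_mem hLpos
  have ha1 : 1 ≤ η.length := List.length_pos_iff.2 hη
  have hab : ℓ * η.length ≤ n := by
    have := hinf.length_le
    rwa [wpow_length] at this
  have hA1 : (1 : ℝ) ≤ (η.length:ℝ) := by exact_mod_cast ha1
  have hb1 : (1 : ℝ) ≤ (ℓ:ℝ) := by exact_mod_cast hℓ
  have habr : (ℓ:ℝ) * (η.length:ℝ) ≤ (n : ℝ) := by exact_mod_cast Nat.cast_le.2 hab
  have hval' : c * (n : ℝ) ^ 3 ≤ (η.length:ℝ) ^ 2 * ((ℓ:ℝ) + 1) ^ 3 := by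
    rw [hval] at hL
    push_cast at hL
    exact hL
  have k1 : ((ℓ:ℝ) + 1) ^ 3 ≤ (2 * (ℓ:ℝ)) ^ 3 := by
    apply pow_le_pow_left₀ (by linarith) (by linarith)
  have k2 : (η.length:ℝ) ^ 2 * (ℓ:ℝ) ^ 2 ≤ (n : ℝ) ^ 2 := by
    have := pow_le_pow_left₀ (by positivity : (0:ℝ) ≤ (ℓ:ℝ) * (η.length:ℝ)) habr 2
    nlinarith
  have k3 : c * (n : ℝ) ≤ 8 * (ℓ:ℝ) := by
    have k4 : c * (n : ℝ) ^ 3 ≤ 8 * (ℓ:ℝ) * (n : ℝ) ^ 2 := by nlinarith [sq_nonneg (η.length:ℝ), sq_nonneg (ℓ:ℝ)]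
    have := le_of_mul_le_mul_right
      (show (c * (n:ℝ)) * ((n:ℝ) * n) ≤ (8 * (ℓ:ℝ)) * ((n:ℝ) * n) by nlinarith) (mul_pos hn0 hn0)
    exact this
  have hkx : (ℓ : ℝ) ^ 3 ≤ 8 * (kxSum w : ℝ) := by
    have := easy_core hη hℓ hinf
    exact_mod_cast this
  have hb3 : (c * (n:ℝ) / 8) ^ 3 ≤ (ℓ:ℝ) ^ 3 := by
    apply pow_le_pow_left₀ (by positivity)
    linarith
  have : (c * (n:ℝ) / 8) ^ 3 = c ^ 3 * (n:ℝ) ^ 3 / 512 := by ring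
  nlinarith

set_option maxHeartbeats 2000000 in
/-- `liminf Λ(x_1...x_n)/n³ > 0` implies `liminf Σ(x_1...x_n)/n³ > 0`,
and conversely. -/
theorem liminf_lam_pos_iff_liminf_kxSum_pos (x : ℕ → Bool) :
    (0 < atTop.liminf (fun n => (Lam (pref x n) : ℝ) / (n : ℝ) ^ 3) →
      0 < atTop.liminf (fun n => (kxSum (pref x n) : ℝ) / (n : ℝ) ^ 3)) ∧
    (0 < atTop.liminf (fun n => (kxSum (pref x n) : ℝ) / (n : ℝ) ^ 3) →
      0 < atTop.liminf (fun n => (Lam (pref x n) : ℝ) / (n : ℝ) ^ 3)) := by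
  set f : ℕ → ℝ := fun n => (Lam (pref x n) : ℝ) / (n : ℝ) ^ 3 with hf_def
  set g : ℕ → ℝ := fun n => (kxSum (pref x n) : ℝ) / (n : ℝ) ^ 3 with hg_def
  have hf0 : ∀ n, 0 ≤ f n := fun n => by rw [hf_def]; positivity
  have hg0 : ∀ n, 0 ≤ g n := fun n => by rw [hg_def]; positivity
  have hfB : ∀ n, f n ≤ 8 := by
    intro n
    rcases Nat.eq_zero_or_pos n with h0 | h0
    · rw [hf_def]; subst h0; simp
    · have hn0 : (0:ℝ) < (n:ℝ)^3 := by positivity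
      rw [hf_def]
      apply (div_le_iff₀ hn0).2
      have := Lam_le (pref x n)
      rw [pref_length] at this
      calc (Lam (pref x n) : ℝ) ≤ 8 * (n:ℝ)^3 := by exact_mod_cast this
      _ = 8 * (n:ℝ)^3 := rfl
  have hgB : ∀ n, g n ≤ 1 := by
    intro n
    rcases Nat.eq_zero_or_pos n with h0 | h0
    · rw [hg_def]; subst h0; simp
    · have hn0 : (0:ℝ) < (n:ℝ)^3 := by positivity
      rw [hg_def]
      apply (div_le_iff₀ hn0).2
      have := kxSum_le (pref x n)
      rw [pref_length] at this
      calc (kxSum (pref x n) : ℝ) ≤ (n:ℝ)^3 := by exact_mod_cast this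
      _ = 1 * (n:ℝ)^3 := by ring
  have hfbdd : Filter.IsBoundedUnder (· ≥ ·) atTop f := Filter.isBoundedUnder_of ⟨0, hf0⟩
  have hgbdd : Filter.IsBoundedUnder (· ≥ ·) atTop g := Filter.isBoundedUnder_of ⟨0, hg0⟩
  have hfcob : Filter.IsCoboundedUnder (· ≥ ·) atTop f :=
    (Filter.isBoundedUnder_of ⟨8, hfB⟩).isCoboundedUnder_flip
  have hgcob : Filter.IsCoboundedUnder (· ≥ ·) atTop g :=
    (Filter.isBoundedUnder_of ⟨1, hgB⟩).isCoboundedUnder_flip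
  constructor
  · -- Lam ⇒ kxSum
    intro hL
    set c := atTop.liminf f / 2 with hc_def
    have hc : 0 < c := by rw [hc_def]; linarith
    have hev : ∀ᶠ n in atTop, c < f n :=
      Filter.eventually_lt_of_lt_liminf (by rw [hc_def]; linarith) hfbdd
    have hev3 : ∀ᶠ n in atTop, c ^ 3 / 4096 ≤ g n := by
      filter_upwards [hev, Filter.eventually_ge_atTop 1] with n h1 h2
      have hn0 : (0:ℝ) < (n:ℝ)^3 := by
        have : (1:ℝ) ≤ (n:ℝ) := by exact_mod_cast h2
        positivity
      have hcn : c * (n:ℝ)^3 ≤ (Lam (pref x n) : ℝ) := by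
        rw [hf_def] at h1
        have h3 := (lt_div_iff₀ hn0).1 h1
        linarith
      have := easy_core_real (w := pref x n) hc (by rw [pref_length]; exact h2)
        (by rw [pref_length]; exact hcn)
      rw [pref_length] at this
      rw [hg_def]
      exact (le_div_iff₀ hn0).2 (by linarith)
    exact lt_of_lt_of_le (by positivity) (Filter.le_liminf_of_le hgcob hev3)
  · -- kxSum ⇒ Lam
    intro hK
    set c := atTop.liminf g / 2 with hc_def
    have hc : 0 < c := by rw [hc_def]; linarith
    have hev : ∀ᶠ n in atTop, c < g n :=
      Filter.eventually_lt_of_lt_liminf (by rw [hc_def]; linarith) hgbdd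
    have hev8 : ∀ᶠ n : ℕ in atTop, 8 / c ≤ (n : ℝ) :=
      tendsto_natCast_atTop_atTop.eventually_ge_atTop (8 / c)
    have hev8' : ∀ᶠ n : ℕ in atTop, 8 / c ^ 2 ≤ (n : ℝ) :=
      tendsto_natCast_atTop_atTop.eventually_ge_atTop (8 / c ^ 2)
    have hev3 : ∀ᶠ n in atTop, c ^ 4 / 32 ≤ f n := by
      filter_upwards [hev, hev8, hev8', Filter.eventually_ge_atTop 1] with n h1 h2 h3 h4
      have hn0 : (0:ℝ) < (n:ℝ)^3 := by
        have : (1:ℝ) ≤ (n:ℝ) := by exact_mod_cast h4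
        positivity
      have hcn : c * (n:ℝ)^3 ≤ (kxSum (pref x n) : ℝ) := by
        rw [hg_def] at h1
        have h5 := (lt_div_iff₀ hn0).1 h1
        linarith
      have hc8 : 8 ≤ c * (n:ℝ) := by
        rw [div_le_iff₀ hc] at h2
        linarith [h2]
      have hc8' : 8 ≤ c ^ 2 * (n:ℝ) := by
        rw [div_le_iff₀ (by positivity : (0:ℝ) < c ^ 2)] at h3
        linarith [h3]
      have := hard_core (w := pref x n) hc (by rw [pref_length]; exact hc8)
        (by rw [pref_length]; exact hc8') (by rw [pref_length]; exact hcn)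
      rw [pref_length] at this
      rw [hf_def]
      exact (le_div_iff₀ hn0).2 (by linarith)
    exact lt_of_lt_of_le (by positivity) (Filter.le_liminf_of_le hfcob hev3)
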